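/- Fix n ≥ 3 and let φ : ℝ^{n+1} → ℝ^{2n−1} be the coefficient map of the n-compartment cycle model. Let p ∈ ℝ^{n+1} have coordinates a_{01}, a_{21}, a_{32}, …, a_{n,n−1}, a_{1n} with a_{32}, …, a_{n,n−1}, a_{1n} pairwise distinct and all nonzero. Then for q ∈ ℝ^{n+1}, one has φ(q) = φ(p) if and only if q has the same first two coordinates a_{01} and a_{21} as p and the remaining n−1 coordinates of q form a permutation of (a_{32}, a_{43}, …, a_{n,n−1}, a_{1n}). -/

import Mathlib

open MvPolynomial

/-- Index `i : Fin (m+3)` recast in `Fin (m+2)` as `i - 1`. -/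
def subOne' {m : ℕ} (i : Fin (m + 3)) : Fin (m + 2) :=
  ⟨i.val - 1, by have := i.isLt; omega⟩

/-- The cycle compartmental matrix with `n = m + 3` compartments. -/
def cycMatrix {R : Type*} [CommRing R] (m : ℕ) (a01 a21 : R) (b : Fin (m + 2) → R) :
    Matrix (Fin (m + 3)) (Fin (m + 3)) R :=
  Matrix.of fun i j =>
    if i = 0 ∧ j = 0 then -a01 - a21
    else if i = 0 ∧ j.val = m + 2 then b (Fin.last (m + 1))
    else if i.val = j.val + 1 then (if j = 0 then a21 else b (subOne' j))
    else if i = j then -(b (subOne' i))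
    else 0

/-- Index type for the `n + 1` parameters of the cycle model (`n = m + 3`):
`.inl 0 ↦ a₀₁`, `.inl 1 ↦ a₂₁`, `.inr k ↦ a_{k+3,k+2}` (with `.inr (m+1) ↦ a_{1n}`). -/
abbrev CycIx (m : ℕ) := Fin 2 ⊕ Fin (m + 2)

/-- The cycle compartmental matrix with the parameters as indeterminates. -/
noncomputable def cycA (m : ℕ) :
    Matrix (Fin (m + 3)) (Fin (m + 3)) (MvPolynomial (CycIx m) ℝ) :=
  cycMatrix m (X (Sum.inl 0)) (X (Sum.inl 1)) (fun k => X (Sum.inr k))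

/-- All `2n - 1` coefficients of the cycle model: `.inl i ↦ c_i`, `.inr i ↦ d_i`,
where `c_i` is the coefficient of `λ^i` in `det (λI - A)` and `d_i` that in
`det (λI - A₁₁)`. -/
noncomputable def cycCoeff (m : ℕ) : Fin (m + 3) ⊕ Fin (m + 2) → MvPolynomial (CycIx m) ℝ :=
  Sum.elim (fun i => (cycA m).charpoly.coeff i.val)
    (fun i => ((cycA m).submatrix Fin.succ Fin.succ).charpoly.coeff i.val)

/-- The coefficient map `φ : ℝ^{n+1} → ℝ^{2n-1}` of the cycle model. -/
noncomputable def cycPhi (m : ℕ) (p : CycIx m → ℝ) : Fin (m + 3) ⊕ Fin (m + 2) → ℝ :=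
  fun s => MvPolynomial.eval p (cycCoeff m s)

section Aux

variable {R : Type*} [CommRing R] (m : ℕ) (a01 a21 : R) (b : Fin (m + 2) → R)

lemma cyc_succ_succ_eq (i : Fin (m + 2)) :
    cycMatrix m a01 a21 b i.succ i.succ = -(b i) := by
  have h1 : subOne' (i.succ) = i := by ext; simp [subOne']
  simp [cycMatrix, Fin.succ_ne_zero, h1]

lemma cyc_succ_succ_lt (i j : Fin (m + 2)) (h : i < j) :
    cycMatrix m a01 a21 b i.succ j.succ = 0 := by
  have h' : i.val < j.val := h
  have h2 : ¬ (i.succ.val = j.succ.val + 1) := by simp only [Fin.val_succ]; omega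
  have h3 : i.succ ≠ j.succ := by simp [Fin.ext_iff]; omega
  simp [cycMatrix, Fin.succ_ne_zero, h2, h3]
  exact fun hh => absurd hh (by omega)

lemma cyc_succ_cast_lt (i j : Fin (m + 2)) (h : j < i) :
    cycMatrix m a01 a21 b i.succ j.castSucc = 0 := by
  have h' : j.val < i.val := h
  have h2 : ¬ (i.succ.val = j.castSucc.val + 1) := by
    simp only [Fin.val_succ, Fin.coe_castSucc]; omega
  have h3 : i.succ ≠ j.castSucc := by simp [Fin.ext_iff]; omega
  simp [cycMatrix, Fin.succ_ne_zero, h2, h3]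
  exact fun hh => absurd hh (by omega)

lemma cyc_succ_cast_eq (i : Fin (m + 2)) :
    cycMatrix m a01 a21 b i.succ i.castSucc =
      if i = 0 then a21 else b ⟨i.val - 1, by omega⟩ := by
  have h2 : i.succ.val = i.castSucc.val + 1 := by simp
  have h4 : (i.castSucc = 0) ↔ (i = 0) := by simp [Fin.ext_iff, -Fin.val_eq_zero_iff]
  by_cases h0 : i = 0
  · simp [cycMatrix, Fin.succ_ne_zero, h2, h4, h0]
  · have : subOne' i.castSucc = ⟨i.val - 1, by omega⟩ := by ext; simp [subOne']
    simp [cycMatrix, Fin.succ_ne_zero, h2, h4, h0, this]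

lemma cyc_zero_zero : cycMatrix m a01 a21 b 0 0 = -a01 - a21 := by
  simp [cycMatrix]

lemma cyc_zero_last : cycMatrix m a01 a21 b 0 (Fin.last (m + 2)) = b (Fin.last (m + 1)) := by
  simp [cycMatrix, Fin.ext_iff, -Fin.val_eq_zero_iff]

lemma cyc_zero_other (j : Fin (m + 3)) (h0 : j ≠ 0) (hl : j ≠ Fin.last (m + 2)) :
    cycMatrix m a01 a21 b 0 j = 0 := by
  have h1 : j.val ≠ 0 := by simpa [Fin.ext_iff, -Fin.val_eq_zero_iff] using h0
  have h2 : j.val ≠ m + 2 := by simpa [Fin.ext_iff] using hl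
  have h3 : ¬ ((0 : Fin (m+3)).val = j.val + 1) := by simp
  have h4 : (0 : Fin (m + 3)) ≠ j := Ne.symm h0
  simp [cycMatrix, h1, h2, h3, h4]
  exact fun hh => absurd hh h0

lemma charmatrix_sub_det :
    ((Matrix.charmatrix (cycMatrix m a01 a21 b)).submatrix Fin.succ Fin.succ).det
      = ∏ k : Fin (m + 2), (Polynomial.X + Polynomial.C (b k)) := by
  rw [Matrix.det_of_lowerTriangular]
  · refine Finset.prod_congr rfl fun i _ => ?_
    rw [Matrix.submatrix_apply, Matrix.charmatrix_apply_eq, cyc_succ_succ_eq, map_neg,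
      sub_neg_eq_add]
  · intro i j h
    have h' : i < j := h
    rw [Matrix.submatrix_apply,
      Matrix.charmatrix_apply_ne _ _ _ (fun hc => absurd (Fin.succ_injective _ hc) h'.ne),
      cyc_succ_succ_lt m a01 a21 b i j h', map_zero, neg_zero]

lemma charmatrix_submatrix_succ :
    Matrix.charmatrix ((cycMatrix m a01 a21 b).submatrix Fin.succ Fin.succ)
      = (Matrix.charmatrix (cycMatrix m a01 a21 b)).submatrix Fin.succ Fin.succ := by
  refine Matrix.ext fun i j => ?_
  rcases eq_or_ne i j with rfl | h
  · rw [Matrix.charmatrix_apply_eq, Matrix.submatrix_apply, Matrix.submatrix_apply,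
      Matrix.charmatrix_apply_eq]
  · rw [Matrix.charmatrix_apply_ne _ _ _ h, Matrix.submatrix_apply, Matrix.submatrix_apply,
      Matrix.charmatrix_apply_ne _ _ _ (fun hc => h (Fin.succ_injective _ hc))]

lemma cyc_sub_charpoly :
    ((cycMatrix m a01 a21 b).submatrix Fin.succ Fin.succ).charpoly
      = ∏ k : Fin (m + 2), (Polynomial.X + Polynomial.C (b k)) := by
  rw [Matrix.charpoly, charmatrix_submatrix_succ, charmatrix_sub_det]

lemma charmatrix_minor2_det :
    ((Matrix.charmatrix (cycMatrix m a01 a21 b)).submatrix Fin.succ Fin.castSucc).det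
      = (-1) ^ (m + 2) * Polynomial.C (a21 * ∏ k : Fin (m + 1), b k.castSucc) := by
  rw [Matrix.det_of_upperTriangular]
  · have hdiag : ∀ i : Fin (m + 2),
        ((Matrix.charmatrix (cycMatrix m a01 a21 b)).submatrix Fin.succ Fin.castSucc) i i
          = -Polynomial.C (if i = 0 then a21 else b ⟨i.val - 1, by omega⟩) := by
      intro i
      rw [Matrix.submatrix_apply,
        Matrix.charmatrix_apply_ne _ _ _ (by simp [Fin.ext_iff]),
        cyc_succ_cast_eq]
    rw [Finset.prod_congr rfl fun i _ => hdiag i]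
    have : ∀ i : Fin (m+2), -Polynomial.C (if i = 0 then a21 else b ⟨i.val - 1, by omega⟩)
        = (-1) * Polynomial.C (if i = 0 then a21 else b ⟨i.val - 1, by omega⟩) := fun i => by
      ring
    rw [Finset.prod_congr rfl fun i _ => this i, Finset.prod_mul_distrib,
      Finset.prod_const, Finset.card_univ, Fintype.card_fin, ← map_prod,
      Fin.prod_univ_succ]
    have hv : ∀ k : Fin (m + 1),
        (if k.succ = (0 : Fin (m + 2)) then a21 else b ⟨k.succ.val - 1, by omega⟩)
          = b k.castSucc := by
      intro k
      rw [if_neg (Fin.succ_ne_zero k)]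
      have : (⟨k.succ.val - 1, by omega⟩ : Fin (m + 2)) = k.castSucc := by
        ext
        simp
      rw [this]
    rw [if_pos rfl, Finset.prod_congr rfl fun k _ => hv k]
  · intro i j h
    have h' : (j : Fin (m+2)) < i := h
    rw [Matrix.submatrix_apply,
      Matrix.charmatrix_apply_ne _ _ _ (by simp [Fin.ext_iff]; omega),
      cyc_succ_cast_lt m a01 a21 b i j h', map_zero, neg_zero]

lemma cyc_charpoly :
    (cycMatrix m a01 a21 b).charpoly =
      (Polynomial.X + Polynomial.C (a01 + a21))
          * ∏ k : Fin (m + 2), (Polynomial.X + Polynomial.C (b k))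
        - Polynomial.C (a21 * ∏ k : Fin (m + 2), b k) := by
  have h0l : (0 : Fin (m + 3)) ≠ Fin.last (m + 2) := by
    simp [Fin.ext_iff]
  rw [Matrix.charpoly, Matrix.det_succ_row_zero,
    Fintype.sum_eq_add (0 : Fin (m + 3)) (Fin.last (m + 2)) h0l (fun j hj => by
      rw [Matrix.charmatrix_apply_ne _ _ _ (Ne.symm hj.1),
        cyc_zero_other m a01 a21 b j hj.1 hj.2, map_zero, neg_zero, mul_zero, zero_mul])]
  rw [Fin.succAbove_zero, Fin.succAbove_last, charmatrix_sub_det, charmatrix_minor2_det,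
    Matrix.charmatrix_apply_eq, cyc_zero_zero,
    Matrix.charmatrix_apply_ne _ _ _ h0l, cyc_zero_last,
    Fin.prod_univ_castSucc (f := fun k => b k)]
  have hs : ((-1 : Polynomial R) ^ (m + 2)) * ((-1 : Polynomial R) ^ (m + 2)) = 1 := by
    rw [← pow_add]
    exact Even.neg_one_pow ⟨m + 2, rfl⟩
  simp only [Fin.val_zero, pow_zero, one_mul, Fin.val_last, map_sub, map_neg, map_add, map_mul]
  linear_combination (-(Polynomial.C (b (Fin.last (m + 1))) * Polynomial.C a21 *
    Polynomial.C (∏ k : Fin (m + 1), b k.castSucc))) * hs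

end Aux

section RealAux

lemma map_cycA (m : ℕ) (p : CycIx m → ℝ) :
    (cycA m).map (MvPolynomial.eval p)
      = cycMatrix m (p (Sum.inl 0)) (p (Sum.inl 1)) (fun k => p (Sum.inr k)) := by
  refine Matrix.ext fun i j => ?_
  simp only [cycA, cycMatrix, Matrix.map_apply, Matrix.of_apply,
    apply_ite (MvPolynomial.eval p), map_sub, map_neg, MvPolynomial.eval_X, map_zero]

lemma cycPhi_inl (m : ℕ) (p : CycIx m → ℝ) (i : Fin (m + 3)) :
    cycPhi m p (Sum.inl i) =
      ((Polynomial.X + Polynomial.C (p (Sum.inl 0) + p (Sum.inl 1)))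
          * ∏ k : Fin (m + 2), (Polynomial.X + Polynomial.C (p (Sum.inr k)))
        - Polynomial.C (p (Sum.inl 1) * ∏ k : Fin (m + 2), p (Sum.inr k))).coeff i.val := by
  have h : MvPolynomial.eval p ((cycA m).charpoly.coeff i.val)
      = ((cycA m).charpoly.map (MvPolynomial.eval p)).coeff i.val :=
    (Polynomial.coeff_map _ _).symm
  rw [cycPhi, cycCoeff, Sum.elim_inl, h, ← Matrix.charpoly_map, map_cycA, cyc_charpoly]

lemma cycPhi_inr (m : ℕ) (p : CycIx m → ℝ) (i : Fin (m + 2)) :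
    cycPhi m p (Sum.inr i) =
      (∏ k : Fin (m + 2), (Polynomial.X + Polynomial.C (p (Sum.inr k)))).coeff i.val := by
  have h : MvPolynomial.eval p (((cycA m).submatrix Fin.succ Fin.succ).charpoly.coeff i.val)
      = (((cycA m).submatrix Fin.succ Fin.succ).charpoly.map (MvPolynomial.eval p)).coeff i.val :=
    (Polynomial.coeff_map _ _).symm
  have h2 : ((cycA m).submatrix Fin.succ Fin.succ).map (MvPolynomial.eval p)
      = ((cycA m).map (MvPolynomial.eval p)).submatrix Fin.succ Fin.succ := rfl
  rw [cycPhi, cycCoeff, Sum.elim_inr, h, ← Matrix.charpoly_map, h2, map_cycA, cyc_sub_charpoly]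

end RealAux

section MainAux

/-- Extract a permutation from equality of the `d`-polynomials. -/
lemma exists_perm_of_prod_eq (m : ℕ) (p' q' : Fin (m + 2) → ℝ)
    (hinj : Function.Injective p')
    (h : ∏ k : Fin (m + 2), (Polynomial.X + Polynomial.C (q' k))
        = ∏ k : Fin (m + 2), (Polynomial.X + Polynomial.C (p' k))) :
    ∃ σ : Equiv.Perm (Fin (m + 2)), ∀ k, q' k = p' (σ k) := by
  have e : ∀ f : Fin (m + 2) → ℝ,
      ∏ k : Fin (m + 2), (Polynomial.X + Polynomial.C (f k))
        = ((Finset.univ.val.map fun k => -(f k)).map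
            fun a => Polynomial.X - Polynomial.C a).prod := by
    intro f
    rw [Multiset.map_map, Finset.prod_eq_multiset_prod]
    congr 1
    refine Multiset.map_congr rfl fun k _ => ?_
    simp [sub_neg_eq_add]
  rw [e, e] at h
  have h2 := congrArg Polynomial.roots h
  rw [Polynomial.roots_multiset_prod_X_sub_C, Polynomial.roots_multiset_prod_X_sub_C] at h2
  have hmulti : (Finset.univ.val.map q') = (Finset.univ.val.map p') := by
    have h3 := congrArg (Multiset.map (fun x : ℝ => -x)) h2
    rw [Multiset.map_map, Multiset.map_map] at h3
    simpa only [Function.comp, neg_neg] using h3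
  -- now build the permutation
  have hnod : (Finset.univ.val.map q').Nodup := by
    rw [hmulti]
    exact Multiset.Nodup.map hinj Finset.univ.nodup
  have hq'inj : Function.Injective q' := by
    intro a b hab
    exact Multiset.inj_on_of_nodup_map hnod a (Finset.mem_val.mpr (Finset.mem_univ a)) b
      (Finset.mem_val.mpr (Finset.mem_univ b)) hab
  have hrange : Set.range q' = Set.range p' := by
    ext x
    simp only [Set.mem_range]
    constructor
    · rintro ⟨k, hk⟩
      have hx : x ∈ Finset.univ.val.map p' := by
        rw [← hmulti]
        exact Multiset.mem_map.mpr ⟨k, Finset.mem_val.mpr (Finset.mem_univ k), hk⟩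
      obtain ⟨j, _, hj⟩ := Multiset.mem_map.mp hx
      exact ⟨j, hj⟩
    · rintro ⟨k, hk⟩
      have hx : x ∈ Finset.univ.val.map q' := by
        rw [hmulti]
        exact Multiset.mem_map.mpr ⟨k, Finset.mem_val.mpr (Finset.mem_univ k), hk⟩
      obtain ⟨j, _, hj⟩ := Multiset.mem_map.mp hx
      exact ⟨j, hj⟩
  refine ⟨((Equiv.ofInjective q' hq'inj).trans (Equiv.setCongr hrange)).trans
    (Equiv.ofInjective p' hinj).symm, fun k => ?_⟩
  simp [Equiv.apply_ofInjective_symm]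

lemma dpol_monic (m : ℕ) (f : Fin (m + 2) → ℝ) :
    (∏ k : Fin (m + 2), (Polynomial.X + Polynomial.C (f k))).Monic :=
  Polynomial.monic_prod_of_monic _ _ fun k _ => Polynomial.monic_X_add_C _

lemma dpol_natDegree (m : ℕ) (f : Fin (m + 2) → ℝ) :
    (∏ k : Fin (m + 2), (Polynomial.X + Polynomial.C (f k))).natDegree = m + 2 := by
  rw [Polynomial.natDegree_prod_of_monic _ _ fun k _ => Polynomial.monic_X_add_C _]
  simp [Polynomial.natDegree_X_add_C]

lemma dpol_coeff_top (m : ℕ) (f : Fin (m + 2) → ℝ) :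
    (∏ k : Fin (m + 2), (Polynomial.X + Polynomial.C (f k))).coeff (m + 2) = 1 := by
  have h := (dpol_monic m f).coeff_natDegree
  rwa [dpol_natDegree] at h

end MainAux


/-- For the `n`-compartment cycle model (`n = m + 3 ≥ 3`), let
`p ∈ ℝ^{n+1}` have its coordinates `a₃₂, …, a_{n,n-1}, a_{1n}` pairwise distinct and all
nonzero. Then `φ(q) = φ(p)` iff `q` agrees with `p` in the coordinates `a₀₁` and `a₂₁`
and the remaining `n - 1` coordinates of `q` are a permutation of those of `p`. -/
theorem cycPhi_eq_iff (m : ℕ) (p : CycIx m → ℝ)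
    (hzero : ∀ k : Fin (m + 2), p (Sum.inr k) ≠ 0)
    (hinj : Function.Injective fun k : Fin (m + 2) => p (Sum.inr k))
    (q : CycIx m → ℝ) :
    cycPhi m q = cycPhi m p ↔
      (q (Sum.inl 0) = p (Sum.inl 0) ∧ q (Sum.inl 1) = p (Sum.inl 1) ∧
        ∃ σ : Equiv.Perm (Fin (m + 2)), ∀ k, q (Sum.inr k) = p (Sum.inr (σ k))) := by
  have e1 : ∀ f : CycIx m → ℝ,
      ((Polynomial.X + Polynomial.C (f (Sum.inl 0) + f (Sum.inl 1)))
          * ∏ k : Fin (m + 2), (Polynomial.X + Polynomial.C (f (Sum.inr k)))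
        - Polynomial.C (f (Sum.inl 1) * ∏ k : Fin (m + 2), f (Sum.inr k))).coeff (m + 2)
      = (∏ k : Fin (m + 2), (Polynomial.X + Polynomial.C (f (Sum.inr k)))).coeff (m + 1)
          + (f (Sum.inl 0) + f (Sum.inl 1)) := by
    intro f
    rw [Polynomial.coeff_sub, add_mul, Polynomial.coeff_add, Polynomial.coeff_X_mul,
      Polynomial.coeff_C_mul, dpol_coeff_top, mul_one, Polynomial.coeff_C]
    simp
  have e0 : ∀ f : CycIx m → ℝ,
      ((Polynomial.X + Polynomial.C (f (Sum.inl 0) + f (Sum.inl 1)))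
          * ∏ k : Fin (m + 2), (Polynomial.X + Polynomial.C (f (Sum.inr k)))
        - Polynomial.C (f (Sum.inl 1) * ∏ k : Fin (m + 2), f (Sum.inr k))).coeff 0
      = (f (Sum.inl 0) + f (Sum.inl 1))
            * (∏ k : Fin (m + 2), (Polynomial.X + Polynomial.C (f (Sum.inr k)))).coeff 0
          - f (Sum.inl 1) * ∏ k : Fin (m + 2), f (Sum.inr k) := by
    intro f
    rw [Polynomial.coeff_sub, add_mul, Polynomial.coeff_add, Polynomial.mul_coeff_zero,
      Polynomial.coeff_X_zero, zero_mul, zero_add, Polynomial.coeff_C_mul,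
      Polynomial.coeff_C_zero]
  constructor
  · intro h
    have hd : ∀ i : Fin (m + 2),
        (∏ k : Fin (m + 2), (Polynomial.X + Polynomial.C (q (Sum.inr k)))).coeff i.val
          = (∏ k : Fin (m + 2), (Polynomial.X + Polynomial.C (p (Sum.inr k)))).coeff i.val := by
      intro i
      have hh := congrFun h (Sum.inr i)
      rwa [cycPhi_inr, cycPhi_inr] at hh
    have hDeq : (∏ k : Fin (m + 2), (Polynomial.X + Polynomial.C (q (Sum.inr k))))
        = ∏ k : Fin (m + 2), (Polynomial.X + Polynomial.C (p (Sum.inr k))) := by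
      ext n
      rcases lt_trichotomy n (m + 2) with hn | rfl | hn
      · exact hd ⟨n, hn⟩
      · rw [dpol_coeff_top, dpol_coeff_top]
      · rw [Polynomial.coeff_eq_zero_of_natDegree_lt (by rw [dpol_natDegree]; omega),
          Polynomial.coeff_eq_zero_of_natDegree_lt (by rw [dpol_natDegree]; omega)]
    obtain ⟨σ, hσ⟩ := exists_perm_of_prod_eq m _ _ hinj hDeq
    have hprod : ∏ k : Fin (m + 2), q (Sum.inr k) = ∏ k : Fin (m + 2), p (Sum.inr k) := by
      rw [Finset.prod_congr rfl fun k _ => hσ k]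
      exact Equiv.prod_comp σ fun k => p (Sum.inr k)
    have hc : ∀ i : Fin (m + 3),
        ((Polynomial.X + Polynomial.C (q (Sum.inl 0) + q (Sum.inl 1)))
            * ∏ k : Fin (m + 2), (Polynomial.X + Polynomial.C (q (Sum.inr k)))
          - Polynomial.C (q (Sum.inl 1) * ∏ k : Fin (m + 2), q (Sum.inr k))).coeff i.val
        = ((Polynomial.X + Polynomial.C (p (Sum.inl 0) + p (Sum.inl 1)))
            * ∏ k : Fin (m + 2), (Polynomial.X + Polynomial.C (p (Sum.inr k)))
          - Polynomial.C (p (Sum.inl 1) * ∏ k : Fin (m + 2), p (Sum.inr k))).coeff i.val := by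
      intro i
      have hh := congrFun h (Sum.inl i)
      rwa [cycPhi_inl, cycPhi_inl] at hh
    have hsum : q (Sum.inl 0) + q (Sum.inl 1) = p (Sum.inl 0) + p (Sum.inl 1) := by
      have h2 := hc ⟨m + 2, by omega⟩
      simp only [Fin.val_mk] at h2
      rw [e1, e1, hDeq] at h2
      linarith
    have hpi : q (Sum.inl 1) * ∏ k : Fin (m + 2), q (Sum.inr k)
        = p (Sum.inl 1) * ∏ k : Fin (m + 2), p (Sum.inr k) := by
      have h2 := hc ⟨0, by omega⟩
      simp only [Fin.val_mk] at h2
      rw [e0, e0, hDeq, hsum] at h2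
      linarith
    have hprodne : ∏ k : Fin (m + 2), p (Sum.inr k) ≠ 0 :=
      Finset.prod_ne_zero_iff.mpr fun k _ => hzero k
    have h1 : q (Sum.inl 1) = p (Sum.inl 1) := by
      rw [hprod] at hpi
      exact mul_right_cancel₀ hprodne hpi
    have h0 : q (Sum.inl 0) = p (Sum.inl 0) := by linarith
    exact ⟨h0, h1, σ, hσ⟩
  · rintro ⟨h0, h1, σ, hσ⟩
    have hDD : (∏ k : Fin (m + 2), (Polynomial.X + Polynomial.C (q (Sum.inr k))))
        = ∏ k : Fin (m + 2), (Polynomial.X + Polynomial.C (p (Sum.inr k))) := by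
      rw [Finset.prod_congr rfl fun k _ => by rw [hσ k]]
      exact Equiv.prod_comp σ fun k => Polynomial.X + Polynomial.C (p (Sum.inr k))
    have hprod : ∏ k : Fin (m + 2), q (Sum.inr k) = ∏ k : Fin (m + 2), p (Sum.inr k) := by
      rw [Finset.prod_congr rfl fun k _ => hσ k]
      exact Equiv.prod_comp σ fun k => p (Sum.inr k)
    funext s
    cases s with
    | inl i => rw [cycPhi_inl, cycPhi_inl, h0, h1, hprod, hDD]
    | inr i => rw [cycPhi_inr, cycPhi_inr, hDD]
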